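/- For every integer n ≥ 1, the following identity holds in ℚ[x]: the sum over all increasing binary trees T with n nodes of the product ∏_{v ∈ T} (x·h_T(v) + 1) equals (1/(n+1)) · ∏_{i=0}^{n−1} ((n+1+i)·x + n+1−i). -/

import Mathlib

/-- Labelled binary trees: every node carries a natural-number label and has an
ordered pair of (possibly empty) subtrees. -/
inductive LBT : Type
  | nil : LBT
  | node : ℕ → LBT → LBT → LBT

/-- The size (number of nodes) of a labelled binary tree. -/
def LBT.size : LBT → ℕ
  | .nil => 0
  | .node _ l r => l.size + r.size + 1

/-- The set of labels appearing in a labelled binary tree. -/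
def LBT.labels : LBT → Finset ℕ
  | .nil => ∅
  | .node a l r => insert a (l.labels ∪ r.labels)

/-- `t.rootGt a` holds when `t` is empty or the label of the root of `t` is `> a`. -/
def LBT.rootGt (a : ℕ) : LBT → Prop
  | .nil => True
  | .node b _ _ => a < b

/-- A labelled binary tree is increasing when every non-root node has a label strictly
larger than the label of its parent. -/
def LBT.Increasing : LBT → Prop
  | .nil => True
  | .node a l r => LBT.rootGt a l ∧ LBT.rootGt a r ∧ l.Increasing ∧ r.Increasing

/-- The product `∏_{v ∈ T} (x · h_T(v) + 1)` over all nodes `v` of a labelled binary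
tree `T`, where `h_T(v)` is the number of nodes of the subtree rooted at `v`,
as a polynomial in `ℚ[x]`. -/
noncomputable def LBT.hookProd : LBT → Polynomial ℚ
  | .nil => 1
  | .node a l r =>
      (Polynomial.X * (((LBT.node a l r).size : ℕ) : Polynomial ℚ) + 1) *
        l.hookProd * r.hookProd

section Aux
open Finset Polynomial

/-- Raney numbers as rationals. -/
def Ran (p r k : ℕ) : ℚ :=
  if k = 0 then 1 else ((k*p+r).choose k : ℚ) - p * ((k*p+r-1).choose (k-1) : ℚ)

lemma Ran_zero' (p r : ℕ) : Ran p r 0 = 1 := by simp [Ran]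

lemma Ran_zero (p k : ℕ) (hk : k ≠ 0) : Ran p 0 k = 0 := by
  rcases Nat.eq_zero_or_pos p with hp | hp
  · subst hp
    simp [Ran, hk, Nat.choose_eq_zero_of_lt (Nat.pos_of_ne_zero hk)]
  · have h1 : 1 ≤ k * p := Nat.one_le_iff_ne_zero.2 (by positivity)
    have key : (k*p) * ((k*p-1).choose (k-1)) = (k*p).choose k * k := by
      have := Nat.add_one_mul_choose_eq (k*p-1) (k-1)
      have e1 : (k*p-1).succ = k*p := by omega
      have e2 : (k-1).succ = k := by omega
      simp only [Nat.succ_eq_add_one] at e1 e2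
      rw [e1, e2] at this
      exact this
    have hk0 : (k : ℚ) ≠ 0 := by exact_mod_cast hk
    have key' : ((k:ℚ)*p) * ((k*p-1).choose (k-1) : ℚ) = ((k*p).choose k : ℚ) * k := by
      exact_mod_cast key
    have h2 : (p:ℚ) * ((k*p-1).choose (k-1):ℚ) = ((k*p).choose k : ℚ) :=
      mul_left_cancel₀ hk0 (by linear_combination key')
    simp only [Ran, hk, if_false, Nat.add_zero]
    linarith [h2]

lemma Ran_one (p r : ℕ) : Ran p r 1 = r := by
  simp only [Ran, if_neg (one_ne_zero), Nat.choose_one_right, Nat.sub_self, Nat.choose_zero_right]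
  push_cast
  ring


lemma Ran_eq (p r k : ℕ) (hk : k ≠ 0) :
    Ran p r k = ((k*p+r).choose k : ℚ) - p * ((k*p+r-1).choose (k-1) : ℚ) := if_neg hk

lemma Ran_pascal (p r k : ℕ) (hp : 1 ≤ p) :
    Ran p (r+1) (k+1) = Ran p r (k+1) + Ran p (r+p) k := by
  cases k with
  | zero => rw [Ran_one, Ran_one, Ran_zero']; push_cast; ring
  | succ j =>
    have hq : 1 ≤ (j+2)*p := le_trans hp (Nat.le_mul_of_pos_left p (by omega))
    obtain ⟨B, hB⟩ : ∃ B, (j+2)*p + r = B+1 := ⟨(j+2)*p+r-1, by omega⟩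
    have e1 : (j+1+1)*p + (r+1) = B+2 := by
      rw [show (j+1+1)*p + (r+1) = ((j+2)*p + r)+1 by ring, hB]
    have e2 : (j+1+1)*p + r = B+1 := by
      rw [show (j+1+1)*p + r = (j+2)*p + r by ring, hB]
    have e3 : (j+1)*p + (r+p) = B+1 := by
      rw [show (j+1)*p + (r+p) = (j+2)*p + r by ring, hB]
    rw [Ran_eq _ _ _ (Nat.succ_ne_zero _), Ran_eq _ _ _ (Nat.succ_ne_zero _),
        Ran_eq _ _ _ (Nat.succ_ne_zero _), e1, e2, e3]
    simp only [Nat.add_sub_cancel, Nat.succ_sub_one]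
    have p1 : (B+2).choose (j+2) = (B+1).choose (j+1) + (B+1).choose (j+2) :=
      Nat.choose_succ_succ' _ _
    have p2 : (B+1).choose (j+1) = B.choose j + B.choose (j+1) :=
      Nat.choose_succ_succ' _ _
    push_cast [p1, p2]
    ring


lemma Ran_conv (p : ℕ) (hp : 1 ≤ p) :
    ∀ n r s, ∑ k ∈ range (n+1), Ran p r k * Ran p s (n-k) = Ran p (r+s) n := by
  intro n
  induction n using Nat.strong_induction_on with
  | _ n ih =>
    intro r
    induction r with
    | zero =>
      intro s
      rw [Finset.sum_range_succ']
      have h0 : ∀ k : ℕ, Ran p 0 (k+1) = 0 := fun k => Ran_zero p (k+1) k.succ_ne_zero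
      simp [h0, Ran_zero']
    | succ r ihr =>
      intro s
      cases n with
      | zero => simp [Ran_zero']
      | succ m =>
        have hs := ihr s
        rw [Finset.sum_range_succ'] at hs ⊢
        simp only [Nat.succ_sub_succ, Ran_zero', one_mul, Nat.sub_zero] at hs ⊢
        have step : ∀ k ∈ range (m+1),
            Ran p (r+1) (k+1) * Ran p s (m-k)
              = Ran p r (k+1) * Ran p s (m-k) + Ran p (r+p) k * Ran p s (m-k) := by
          intro k _
          rw [Ran_pascal p r k hp, add_mul]
        rw [Finset.sum_congr rfl step, Finset.sum_add_distrib]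
        have houter := ih m (Nat.lt_succ_self m) (r+p) s
        rw [houter]
        have : Ran p (r+1+s) (m+1) = Ran p (r+s) (m+1) + Ran p (r+s+p) m := by
          have := Ran_pascal p (r+s) m hp
          rw [show r+1+s = r+s+1 by ring]
          exact this
        rw [this, ← hs]
        ring_nf


lemma Ran_formula (N a k : ℕ) (hN : 1 ≤ N) (ha : 1 ≤ a) :
    Ran N (a*N) k = (a : ℚ)/(k+a) * (((k+a)*N).choose k : ℚ) := by
  have hka : ((k:ℚ)+a) ≠ 0 := by positivity
  cases k with
  | zero => simp [Ran_zero', div_self (show (a:ℚ) ≠ 0 from Nat.cast_ne_zero.2 (by omega))]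
  | succ j =>
    have hM : 1 ≤ (j+1+a)*N := le_trans hN (Nat.le_mul_of_pos_left N (by omega))
    have e1 : (j+1)*N + a*N = (j+1+a)*N := by ring
    rw [Ran_eq _ _ _ (Nat.succ_ne_zero _), e1]
    have key : ((j+1+a)*N) * (((j+1+a)*N-1).choose j) = ((j+1+a)*N).choose (j+1) * (j+1) := by
      have := Nat.add_one_mul_choose_eq ((j+1+a)*N-1) j
      have e2 : ((j+1+a)*N-1).succ = (j+1+a)*N := by omega
      simp only [Nat.succ_eq_add_one] at e2
      rw [e2] at this
      exact this
    have key' : (((j+1+a)*N : ℕ) : ℚ) * (((j+1+a)*N-1).choose j : ℚ)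
        = (((j+1+a)*N).choose (j+1) : ℚ) * (j+1) := by exact_mod_cast key
    have hNQ : (N:ℚ) ≠ 0 := by positivity
    simp only [Nat.succ_sub_one]
    push_cast at key' ⊢
    field_simp
    nlinarith [key']


lemma prod_desc (a k : ℕ) (h : k ≤ a) :
    ∏ i ∈ range k, ((a:ℚ) - i) = (k.factorial : ℚ) * (a.choose k : ℚ) := by
  induction k with
  | zero => simp
  | succ j ih =>
    rw [Finset.prod_range_succ, ih (by omega)]
    have key : a.choose (j+1) * (j+1) = a.choose j * (a - j) := Nat.choose_succ_right_eq a j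
    have key' : (a.choose (j+1) : ℚ) * (j+1) = (a.choose j : ℚ) * ((a:ℚ) - j) := by
      have hc : ((a - j : ℕ) : ℚ) = (a:ℚ) - j := by
        push_cast [Nat.cast_sub (by omega : j ≤ a)]; ring
      rw [← hc]; exact_mod_cast key
    push_cast [Nat.factorial_succ]
    rw [mul_assoc, ← key']
    ring

noncomputable def Gcl (n : ℕ) : Polynomial ℚ :=
  Polynomial.C ((n + 1 : ℚ)⁻¹) *
    ∏ i ∈ Finset.range n,
      (((n : Polynomial ℚ) + 1 + (i : Polynomial ℚ)) * Polynomial.X +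
        ((n : Polynomial ℚ) + 1 - (i : Polynomial ℚ)))

lemma eval_Gcl (k N : ℕ) (hN : 1 ≤ N) :
    (Gcl k).eval (((N:ℚ)-1)/((N:ℚ)+1))
      = (2/((N:ℚ)+1))^k * (k.factorial : ℚ) * Ran N N k := by
  have hN1 : ((N:ℚ)+1) ≠ 0 := by positivity
  have hk1 : ((k:ℚ)+1) ≠ 0 := by positivity
  simp only [Gcl, Polynomial.eval_mul, Polynomial.eval_C, Polynomial.eval_prod,
    Polynomial.eval_add, Polynomial.eval_sub, Polynomial.eval_X, Polynomial.eval_natCast,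
    Polynomial.eval_one]
  have hfac : ∀ i ∈ range k,
      (((k:ℚ) + 1 + (i:ℚ)) * (((N:ℚ)-1)/((N:ℚ)+1)) + ((k:ℚ) + 1 - (i:ℚ)))
        = (2/((N:ℚ)+1)) * ((((k+1)*N : ℕ) : ℚ) - (i:ℚ)) := by
    intro i _
    push_cast
    field_simp
    ring
  rw [Finset.prod_congr rfl hfac, Finset.prod_mul_distrib, Finset.prod_const,
    Finset.card_range, prod_desc ((k+1)*N) k (le_trans (by omega) (Nat.le_mul_of_pos_right (k+1) (by omega)))]
  have hf := Ran_formula N 1 k hN le_rfl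
  rw [one_mul] at hf
  rw [hf]
  push_cast
  field_simp


lemma key_eval (n N : ℕ) (hN : 1 ≤ N) :
    (((n:ℚ)+1) * (((N:ℚ)-1)/((N:ℚ)+1)) + 1) *
      ∑ k ∈ range (n+1), (n.choose k : ℚ) *
        ((2/((N:ℚ)+1))^k * (k.factorial : ℚ) * Ran N N k) *
        ((2/((N:ℚ)+1))^(n-k) * ((n-k).factorial : ℚ) * Ran N N (n-k))
      = (2/((N:ℚ)+1))^(n+1) * ((n+1).factorial : ℚ) * Ran N N (n+1) := by
  have hN1 : ((N:ℚ)+1) ≠ 0 := by positivity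
  have hterm : ∀ k ∈ range (n+1),
      (n.choose k : ℚ) * ((2/((N:ℚ)+1))^k * (k.factorial : ℚ) * Ran N N k) *
        ((2/((N:ℚ)+1))^(n-k) * ((n-k).factorial : ℚ) * Ran N N (n-k))
      = ((2/((N:ℚ)+1))^n * (n.factorial : ℚ)) * (Ran N N k * Ran N N (n-k)) := by
    intro k hk
    have hkn : k ≤ n := by simpa [Nat.lt_succ_iff] using hk
    have hpow : (2/((N:ℚ)+1))^k * (2/((N:ℚ)+1))^(n-k) = (2/((N:ℚ)+1))^n := by
      rw [← pow_add]; congr 1; omega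
    have hfact : (n.choose k : ℚ) * (k.factorial : ℚ) * ((n-k).factorial : ℚ)
        = (n.factorial : ℚ) := by
      exact_mod_cast congrArg (Nat.cast : ℕ → ℚ)
        (Nat.choose_mul_factorial_mul_factorial hkn)
    calc (n.choose k : ℚ) * ((2/((N:ℚ)+1))^k * (k.factorial : ℚ) * Ran N N k) *
        ((2/((N:ℚ)+1))^(n-k) * ((n-k).factorial : ℚ) * Ran N N (n-k))
        = ((n.choose k : ℚ) * (k.factorial : ℚ) * ((n-k).factorial : ℚ)) *
          ((2/((N:ℚ)+1))^k * (2/((N:ℚ)+1))^(n-k)) * (Ran N N k * Ran N N (n-k)) := by ring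
      _ = ((2/((N:ℚ)+1))^n * (n.factorial : ℚ)) * (Ran N N k * Ran N N (n-k)) := by
          rw [hfact, hpow]; ring
  rw [Finset.sum_congr rfl hterm, ← Finset.mul_sum, Ran_conv N hN n N N]
  -- now pure arithmetic with Ran N (N+N) n and Ran N N (n+1)
  have h2N : Ran N (N+N) n = (2:ℚ)/((n:ℚ)+2) * (((n+2)*N).choose n : ℚ) := by
    have := Ran_formula N 2 n hN (by omega)
    rw [show 2*N = N+N by ring] at this
    rw [this]; push_cast; ring_nf
  have h1N : Ran N N (n+1) = (1:ℚ)/((n:ℚ)+2) * (((n+2)*N).choose (n+1) : ℚ) := by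
    have := Ran_formula N 1 (n+1) hN le_rfl
    rw [one_mul] at this
    rw [this, show (n+1)+1 = n+2 by ring]
    push_cast; ring_nf
  have hkey : (((n+2)*N : ℕ):ℚ) - n ≠ 0 ∨ True := Or.inr trivial
  have key : (((n+2)*N).choose (n+1) : ℚ) * ((n:ℚ)+1)
      = (((n+2)*N).choose n : ℚ) * ((((n+2)*N : ℕ):ℚ) - (n:ℚ)) := by
    have hle : n ≤ (n+2)*N := le_trans (by omega) (Nat.le_mul_of_pos_right (n+2) (by omega))
    have := Nat.choose_succ_right_eq ((n+2)*N) n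
    have hc : (((n+2)*N - n : ℕ) : ℚ) = (((n+2)*N : ℕ):ℚ) - (n:ℚ) := by
      push_cast [Nat.cast_sub hle]; ring
    rw [← hc]
    exact_mod_cast this
  rw [h2N, h1N]
  have hn2 : ((n:ℚ)+2) ≠ 0 := by positivity
  have hfs : ((n+1).factorial : ℚ) = ((n:ℚ)+1) * (n.factorial : ℚ) := by
    push_cast [Nat.factorial_succ]; ring
  rw [hfs]
  have hNe : (((n+2)*N : ℕ):ℚ) = ((n:ℚ)+2) * (N:ℚ) := by push_cast; ring
  rw [hNe] at key
  field_simp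
  have hc : ((N:ℚ)+1) * (2/((N:ℚ)+1)) = 2 := by field_simp
  rw [pow_succ]
  linear_combination (-2 * (2/((N:ℚ)+1))^n) * key
    - ((n:ℚ)+1) * (2/((N:ℚ)+1))^n * (((n+2)*N).choose (n+1) : ℚ) * hc


lemma key_poly (n : ℕ) :
    (Polynomial.X * (((n+1 : ℕ) : ℕ) : Polynomial ℚ) + 1) *
      ∑ k ∈ range (n+1), ((n.choose k : ℕ) : Polynomial ℚ) * Gcl k * Gcl (n-k)
      = Gcl (n+1) := by
  rw [← sub_eq_zero]
  apply Polynomial.eq_zero_of_infinite_isRoot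
  apply Set.infinite_of_injective_forall_mem
    (f := fun M : ℕ => (((M+1 : ℕ):ℚ)-1)/(((M+1 : ℕ):ℚ)+1))
  · intro a b hab
    simp only at hab
    have ha : (((a+1:ℕ):ℚ)+1) ≠ 0 := by positivity
    have hb : (((b+1:ℕ):ℚ)+1) ≠ 0 := by positivity
    rw [div_eq_div_iff ha hb] at hab
    push_cast at hab
    have : (a:ℚ) = b := by nlinarith [hab]
    exact_mod_cast this
  · intro M
    have hN1 : 1 ≤ M+1 := by omega
    simp only [Set.mem_setOf_eq, Polynomial.IsRoot, Polynomial.eval_sub,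
      Polynomial.eval_mul, Polynomial.eval_add, Polynomial.eval_one, Polynomial.eval_X,
      Polynomial.eval_natCast, Polynomial.eval_finset_sum]
    rw [sub_eq_zero]
    rw [Finset.sum_congr rfl (fun k _ => by
      rw [eval_Gcl k (M+1) hN1, eval_Gcl (n-k) (M+1) hN1])]
    rw [eval_Gcl (n+1) (M+1) hN1]
    have hk := key_eval n (M+1) hN1
    push_cast at hk ⊢
    linear_combination hk


deriving instance DecidableEq for LBT

def GoodT (S : Finset ℕ) (t : LBT) : Prop :=
  t.size = S.card ∧ t.labels = S ∧ t.Increasing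

lemma finite_bounded : ∀ n : ℕ, ∀ S : Finset ℕ,
    {t : LBT | t.size ≤ n ∧ t.labels ⊆ S}.Finite := by
  intro n
  induction n with
  | zero =>
    intro S
    apply Set.Finite.subset (Set.finite_singleton LBT.nil)
    rintro t ⟨h1, -⟩
    cases t with
    | nil => simp
    | node a l r => simp [LBT.size] at h1
  | succ n ih =>
    intro S
    apply Set.Finite.subset
      (Set.Finite.insert LBT.nil
        (Set.Finite.image (fun x : ℕ × LBT × LBT => LBT.node x.1 x.2.1 x.2.2)
          (Set.Finite.prod S.finite_toSet (Set.Finite.prod (ih S) (ih S)))))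
    rintro t ⟨h1, h2⟩
    cases t with
    | nil => exact Set.mem_insert _ _
    | node a l r =>
      simp only [LBT.size] at h1
      refine Set.mem_insert_of_mem _ ⟨(a, l, r), ⟨?_, ⟨?_, ?_⟩, ⟨?_, ?_⟩⟩, rfl⟩
      · exact h2 (by simp [LBT.labels])
      · simp only [Set.mem_setOf_eq] at *; omega
      · intro x hx; exact h2 (by simp [LBT.labels, hx])
      · simp only [Set.mem_setOf_eq] at *; omega
      · intro x hx; exact h2 (by simp [LBT.labels, hx])

lemma finite_good (S : Finset ℕ) : {t : LBT | GoodT S t}.Finite := by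
  apply Set.Finite.subset (finite_bounded S.card S)
  rintro t ⟨h1, h2, -⟩
  exact ⟨le_of_eq h1, by rw [h2]⟩

noncomputable def TreeFin (S : Finset ℕ) : Finset LBT := (finite_good S).toFinset

lemma mem_TreeFin {S : Finset ℕ} {t : LBT} : t ∈ TreeFin S ↔ GoodT S t := by
  simp [TreeFin, Set.Finite.mem_toFinset]

noncomputable def HS (S : Finset ℕ) : Polynomial ℚ := ∑ t ∈ TreeFin S, t.hookProd

lemma card_le_size : ∀ t : LBT, t.labels.card ≤ t.size := by
  intro t
  induction t with
  | nil => simp [LBT.labels, LBT.size]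
  | node a l r ihl ihr =>
    simp only [LBT.labels, LBT.size]
    calc (insert a (l.labels ∪ r.labels)).card ≤ (l.labels ∪ r.labels).card + 1 :=
          Finset.card_insert_le _ _
      _ ≤ (l.labels.card + r.labels.card) + 1 := by
          have := Finset.card_union_le l.labels r.labels; omega
      _ ≤ l.size + r.size + 1 := by omega

lemma incr_lt : ∀ (t : LBT) (a : ℕ), t.rootGt a → t.Increasing → ∀ b ∈ t.labels, a < b := by
  intro t
  induction t with
  | nil => intro a _ _ b hb; simp [LBT.labels] at hb
  | node c l r ihl ihr =>
    intro a hroot hinc b hb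
    obtain ⟨hl, hr, il, ir⟩ := hinc
    have hac : a < c := hroot
    simp only [LBT.labels, Finset.mem_insert, Finset.mem_union] at hb
    rcases hb with rfl | hb | hb
    · exact hac
    · exact lt_trans hac (ihl c hl il b hb)
    · exact lt_trans hac (ihr c hr ir b hb)

def LBT.leftT : LBT → LBT
  | .nil => .nil
  | .node _ l _ => l

def LBT.rightT : LBT → LBT
  | .nil => .nil
  | .node _ _ r => r

lemma good_node {S : Finset ℕ} (hS : S.Nonempty) {t : LBT} (ht : GoodT S t) :
    ∃ l r : LBT, t = LBT.node (S.min' hS) l r ∧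
      l.labels ⊆ S.erase (S.min' hS) ∧
      r.labels = (S.erase (S.min' hS)) \ l.labels ∧
      GoodT l.labels l ∧ GoodT r.labels r := by
  obtain ⟨hsize, hlab, hinc⟩ := ht
  cases t with
  | nil =>
    exfalso
    have := Finset.card_pos.2 hS
    simp [LBT.size] at hsize
    omega
  | node a l r =>
    obtain ⟨hl, hr, il, ir⟩ := hinc
    have haS : a ∈ S := by rw [← hlab]; simp [LBT.labels]
    have hmin : a = S.min' hS := by
      apply le_antisymm
      · apply Finset.le_min'
        intro b hb
        rw [← hlab] at hb
        simp only [LBT.labels, Finset.mem_insert, Finset.mem_union] at hb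
        rcases hb with rfl | hb | hb
        · exact le_refl b
        · exact (incr_lt l a hl il b hb).le
        · exact (incr_lt r a hr ir b hb).le
      · exact Finset.min'_le S a haS
    have h1 : l.labels.card ≤ l.size := card_le_size l
    have h2 : r.labels.card ≤ r.size := card_le_size r
    have hsz : l.size + r.size + 1 = S.card := hsize
    have hcardins : (insert a (l.labels ∪ r.labels)).card = S.card := by
      rw [show insert a (l.labels ∪ r.labels) = (LBT.node a l r).labels from rfl, hlab]
    have h3 : (insert a (l.labels ∪ r.labels)).card ≤ (l.labels ∪ r.labels).card + 1 :=
      Finset.card_insert_le _ _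
    have h4 : (l.labels ∪ r.labels).card ≤ l.labels.card + r.labels.card :=
      Finset.card_union_le _ _
    have h5 : (l.labels ∪ r.labels).card + (l.labels ∩ r.labels).card
        = l.labels.card + r.labels.card := Finset.card_union_add_card_inter _ _
    have hanotin : a ∉ l.labels ∪ r.labels := by
      intro hmem
      rw [Finset.insert_eq_self.2 hmem] at hcardins
      omega
    have hinter : (l.labels ∩ r.labels).card = 0 := by
      have h6 : (insert a (l.labels ∪ r.labels)).card = (l.labels ∪ r.labels).card + 1 :=
        Finset.card_insert_of_notMem hanotin
      omega
    have hdisj : Disjoint l.labels r.labels :=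
      Finset.disjoint_iff_inter_eq_empty.2 (Finset.card_eq_zero.1 hinter)
    have herase : S.erase a = l.labels ∪ r.labels := by
      rw [← hlab]
      show ((LBT.node a l r).labels).erase a = _
      rw [show (LBT.node a l r).labels = insert a (l.labels ∪ r.labels) from rfl,
        Finset.erase_insert hanotin]
    have hlsize : l.size = l.labels.card := by omega
    have hrsize : r.size = r.labels.card := by omega
    refine ⟨l, r, by rw [← hmin], ?_, ?_, ⟨hlsize, rfl, il⟩, ⟨hrsize, rfl, ir⟩⟩
    · rw [← hmin, herase]; exact Finset.subset_union_left
    · rw [← hmin, herase]; exact (Finset.union_sdiff_cancel_left hdisj).symm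

lemma good_node_mem {S : Finset ℕ} (hS : S.Nonempty) {A : Finset ℕ} {l r : LBT}
    (hA : A ⊆ S.erase (S.min' hS)) (hl : GoodT A l) (hr : GoodT ((S.erase (S.min' hS)) \ A) r) :
    GoodT S (LBT.node (S.min' hS) l r) := by
  set m := S.min' hS with hm
  have hmS : m ∈ S := S.min'_mem hS
  have hcardsd : ((S.erase m) \ A).card = (S.erase m).card - A.card := Finset.card_sdiff_of_subset hA
  have hAle : A.card ≤ (S.erase m).card := Finset.card_le_card hA
  have hce : (S.erase m).card = S.card - 1 := Finset.card_erase_of_mem hmS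
  have hcpos : 1 ≤ S.card := Finset.card_pos.2 hS
  have hgt : ∀ b ∈ S.erase m, m < b := by
    intro b hb
    rw [Finset.mem_erase] at hb
    exact lt_of_le_of_ne (Finset.min'_le S b hb.2) (Ne.symm hb.1)
  refine ⟨?_, ?_, ?_, ?_, hl.2.2, hr.2.2⟩
  · show l.size + r.size + 1 = S.card
    rw [hl.1, hr.1, hcardsd]
    omega
  · show insert m (l.labels ∪ r.labels) = S
    rw [hl.2.1, hr.2.1, Finset.union_sdiff_of_subset hA, Finset.insert_erase hmS]
  · cases l with
    | nil => trivial
    | node b l1 l2 =>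
      show m < b
      have hb : b ∈ A := by rw [← hl.2.1]; simp [LBT.labels]
      exact hgt b (hA hb)
  · cases r with
    | nil => trivial
    | node b r1 r2 =>
      show m < b
      have hb : b ∈ (S.erase m) \ A := by rw [← hr.2.1]; simp [LBT.labels]
      exact hgt b (Finset.mem_sdiff.1 hb).1

lemma HS_node (S : Finset ℕ) (hS : S.Nonempty) :
    HS S = ∑ x ∈ (S.erase (S.min' hS)).powerset.sigma
        (fun A => (TreeFin A) ×ˢ (TreeFin ((S.erase (S.min' hS)) \ A))),
      (LBT.node (S.min' hS) x.2.1 x.2.2).hookProd := by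
  apply Finset.sum_bij'
    (i := fun t _ => (⟨t.leftT.labels, (t.leftT, t.rightT)⟩ :
      (A : Finset ℕ) × (LBT × LBT)))
    (j := fun x _ => LBT.node (S.min' hS) x.2.1 x.2.2)
  · -- hi : i maps into sigma set
    intro t ht
    obtain ⟨l, r, rfl, hsub, hsd, hgl, hgr⟩ := good_node hS (mem_TreeFin.1 ht)
    simp only [LBT.leftT, LBT.rightT]
    rw [Finset.mem_sigma, Finset.mem_product]
    refine ⟨Finset.mem_powerset.2 hsub, mem_TreeFin.2 hgl, mem_TreeFin.2 ?_⟩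
    rw [← hsd]
    exact hgr
  · -- hj
    rintro ⟨A, l, r⟩ hx
    rw [Finset.mem_sigma, Finset.mem_product] at hx
    exact mem_TreeFin.2 (good_node_mem hS (Finset.mem_powerset.1 hx.1)
      (mem_TreeFin.1 hx.2.1) (mem_TreeFin.1 hx.2.2))
  · -- left inverse
    intro t ht
    obtain ⟨l, r, rfl, -, -, -, -⟩ := good_node hS (mem_TreeFin.1 ht)
    rfl
  · -- right inverse
    rintro ⟨A, l, r⟩ hx
    rw [Finset.mem_sigma, Finset.mem_product] at hx
    have hlab : l.labels = A := (mem_TreeFin.1 hx.2.1).2.1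
    simp only [LBT.leftT, LBT.rightT]
    subst hlab
    rfl
  · -- values
    intro t ht
    obtain ⟨l, r, rfl, -, -, -, -⟩ := good_node hS (mem_TreeFin.1 ht)
    rfl

lemma HS_formula (S : Finset ℕ) (hS : S.Nonempty) :
    HS S = (Polynomial.X * ((S.card : ℕ) : Polynomial ℚ) + 1) *
      ∑ A ∈ (S.erase (S.min' hS)).powerset, HS A * HS ((S.erase (S.min' hS)) \ A) := by
  rw [HS_node S hS, Finset.sum_sigma, Finset.mul_sum]
  apply Finset.sum_congr rfl
  intro A hA
  have hA' := Finset.mem_powerset.1 hA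
  have key : ∀ y ∈ (TreeFin A) ×ˢ (TreeFin ((S.erase (S.min' hS)) \ A)),
      (LBT.node (S.min' hS) y.1 y.2).hookProd
        = (Polynomial.X * ((S.card : ℕ) : Polynomial ℚ) + 1) *
            (y.1.hookProd * y.2.hookProd) := by
    rintro ⟨l, r⟩ hy
    rw [Finset.mem_product] at hy
    have hgl := mem_TreeFin.1 hy.1
    have hgr := mem_TreeFin.1 hy.2
    have hsz : (LBT.node (S.min' hS) l r).size = S.card := (good_node_mem hS hA' hgl hgr).1
    show (Polynomial.X * (((LBT.node (S.min' hS) l r).size : ℕ) : Polynomial ℚ) + 1) *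
      l.hookProd * r.hookProd = _
    rw [hsz, mul_assoc]
  rw [Finset.sum_congr rfl key, ← Finset.mul_sum]
  congr 1
  rw [HS, HS, Finset.sum_mul_sum, Finset.sum_product]

noncomputable def Fr : ℕ → Polynomial ℚ
  | 0 => 1
  | (n+1) => (Polynomial.X * (((n+1 : ℕ) : ℕ) : Polynomial ℚ) + 1) *
      ∑ k ∈ (Finset.range (n+1)).attach,
        ((n.choose k.1 : ℕ) : Polynomial ℚ) * Fr k.1 * Fr (n - k.1)
  decreasing_by
  · have := k.2; rw [Finset.mem_range] at this; omega
  · omega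

lemma Fr_succ (n : ℕ) : Fr (n+1) = (Polynomial.X * (((n+1 : ℕ) : ℕ) : Polynomial ℚ) + 1) *
    ∑ k ∈ Finset.range (n+1), ((n.choose k : ℕ) : Polynomial ℚ) * Fr k * Fr (n - k) := by
  rw [Fr, Finset.sum_attach _ (fun k => ((n.choose k : ℕ) : Polynomial ℚ) * Fr k * Fr (n - k))]

lemma Hmain : ∀ (n : ℕ) (S : Finset ℕ), S.card = n → HS S = Fr n := by
  intro n
  induction n using Nat.strong_induction_on with
  | _ n ih =>
    intro S hcard
    cases n with
    | zero =>
      have hS : S = ∅ := Finset.card_eq_zero.1 hcard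
      subst hS
      have : TreeFin (∅ : Finset ℕ) = {LBT.nil} := by
        ext t
        rw [mem_TreeFin, Finset.mem_singleton]
        constructor
        · rintro ⟨h1, -, -⟩
          cases t with
          | nil => rfl
          | node a l r => simp [LBT.size] at h1
        · rintro rfl
          exact ⟨rfl, rfl, trivial⟩
      rw [HS, this, Finset.sum_singleton]
      show (1 : Polynomial ℚ) = Fr 0
      rw [Fr]
    | succ m =>
      have hS : S.Nonempty := Finset.card_pos.1 (by omega)
      set E := S.erase (S.min' hS) with hE
      have hEcard : E.card = m := by
        rw [hE, Finset.card_erase_of_mem (S.min'_mem hS)]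
        omega
      rw [HS_formula S hS, hcard, Fr_succ]
      congr 1
      rw [Finset.sum_powerset, hEcard]
      apply Finset.sum_congr rfl
      intro j hj
      rw [Finset.mem_range] at hj
      have hconst : ∀ A ∈ Finset.powersetCard j E,
          HS A * HS (E \ A) = Fr j * Fr (m - j) := by
        intro A hA
        rw [Finset.mem_powersetCard] at hA
        have h1 : HS A = Fr j := ih j (by omega) A hA.2
        have h2 : HS (E \ A) = Fr (m - j) := by
          apply ih (m - j) (by omega)
          rw [Finset.card_sdiff_of_subset hA.1, hEcard, hA.2]
        rw [h1, h2]
      rw [Finset.sum_congr rfl hconst, Finset.sum_const, Finset.card_powersetCard, hEcard,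
        nsmul_eq_mul, mul_assoc]

lemma Fr_eq_Gcl : ∀ n, Fr n = Gcl n := by
  intro n
  induction n using Nat.strong_induction_on with
  | _ n ih =>
    cases n with
    | zero =>
      rw [Fr, Gcl]
      simp
    | succ m =>
      rw [Fr_succ]
      have hcongr : ∑ k ∈ Finset.range (m+1), ((m.choose k : ℕ) : Polynomial ℚ) * Fr k * Fr (m - k)
          = ∑ k ∈ Finset.range (m+1), ((m.choose k : ℕ) : Polynomial ℚ) * Gcl k * Gcl (m - k) := by
        apply Finset.sum_congr rfl
        intro k hk
        rw [Finset.mem_range] at hk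
        rw [ih k (by omega), ih (m - k) (by omega)]
      rw [hcongr]
      exact key_poly m

end Aux

/-- Postnikov/Du–Liu/Lascoux hook formula: for every `n ≥ 1`, the sum over all increasing
binary trees `T` with `n` nodes (labelled bijectively by `{1, …, n}`, children having
larger labels than their parents) of `∏_{v ∈ T} (x · h_T(v) + 1)` equals
`(1/(n+1)) · ∏_{i=0}^{n−1} ((n+1+i)·x + n+1−i)`, as an identity in `ℚ[x]`. -/
theorem stmt6 (n : ℕ) (hn : 1 ≤ n) :
    ∑ᶠ (t : LBT) (_ : t.size = n ∧ t.labels = Finset.Icc 1 n ∧ t.Increasing), t.hookProd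
      = Polynomial.C ((n + 1 : ℚ)⁻¹) *
          ∏ i ∈ Finset.range n,
            (((n : Polynomial ℚ) + 1 + (i : Polynomial ℚ)) * Polynomial.X +
              ((n : Polynomial ℚ) + 1 - (i : Polynomial ℚ))) := by
  have h1 : (Finset.Icc 1 n).card = n := by rw [Nat.card_Icc]; omega
  have hpred : ∀ t : LBT,
      (t.size = n ∧ t.labels = Finset.Icc 1 n ∧ t.Increasing) = GoodT (Finset.Icc 1 n) t := by
    intro t
    unfold GoodT
    rw [h1]
  have e1 : ∑ᶠ (t : LBT) (_ : t.size = n ∧ t.labels = Finset.Icc 1 n ∧ t.Increasing),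
      t.hookProd = ∑ᶠ (t : LBT) (_ : GoodT (Finset.Icc 1 n) t), t.hookProd := by
    apply finsum_congr
    intro t
    rw [hpred t]
  rw [e1]
  have e2 : ∑ᶠ (t : LBT) (_ : GoodT (Finset.Icc 1 n) t), t.hookProd
      = ∑ t ∈ TreeFin (Finset.Icc 1 n), t.hookProd := by
    rw [← finsum_mem_coe_finset]
    apply finsum_congr
    intro t
    have : (t ∈ (TreeFin (Finset.Icc 1 n) : Finset LBT)) = GoodT (Finset.Icc 1 n) t := by
      rw [mem_TreeFin]
    rw [← this]
    rfl
  rw [e2]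
  have e3 : (∑ t ∈ TreeFin (Finset.Icc 1 n), t.hookProd) = Fr n := by
    have := Hmain n (Finset.Icc 1 n) h1
    rw [← this]
    rfl
  rw [e3, Fr_eq_Gcl n, Gcl]
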